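/- Suppose |r(s,a,s')| ≤ 1 for all (s,a,s') and ‖V‖_∞ ≤ 1/(1−γ). Let w(s,a,s') := e_s·(r(s,a,s') + γ V(s') − V(s)) − (D R^π + γ D P^π V − D V) and define the covariance matrix W := Σ_{s,a,s'} d(s)·π(a|s)·P(s'|s,a)·w(s,a,s')·w(s,a,s')^T. Then W is symmetric positive semidefinite and its maximum eigenvalue satisfies λ_max(W) ≤ 9/(1−γ)². -/

import Mathlib

open Finset Matrix

noncomputable def tdNoise {S A : Type*} [Fintype S] [Fintype A] [DecidableEq S]
    (γ : ℝ) (π : S → A → ℝ) (P : S → A → S → ℝ) (r : S → A → S → ℝ)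
    (d : S → ℝ) (V : S → ℝ) (s : S) (a : A) (s' : S) : S → ℝ :=
  fun t =>
    (if t = s then 1 else 0) * (r s a s' + γ * V s' - V s) -
      (d t * (∑ b, ∑ u, π t b * P t b u * r t b u) +
        γ * (d t * ∑ u, (∑ b, π t b * P t b u) * V u) - d t * V t)

noncomputable def lamMax {S : Type*} [Fintype S] (M : Matrix S S ℝ) : ℝ :=
  sSup {μ : ℝ | ∃ v : S → ℝ, v ≠ 0 ∧ M.mulVec v = μ • v}

section aux
variable {S I : Type*} [Fintype S] [Fintype I]

lemma quad_form_eq (c : I → ℝ) (w : I → S → ℝ) (v : S → ℝ) :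
    v ⬝ᵥ (Matrix.of fun i j => ∑ k, c k * (w k i * w k j)).mulVec v
      = ∑ k, c k * (∑ t, w k t * v t) ^ 2 := by
  have h : ∀ k : I, c k * (∑ t, w k t * v t) ^ 2
      = ∑ i, ∑ j, v i * ((c k * (w k i * w k j)) * v j) := by
    intro k
    rw [sq, Finset.sum_mul_sum, Finset.mul_sum]
    refine Finset.sum_congr rfl fun i _ => ?_
    rw [Finset.mul_sum]
    refine Finset.sum_congr rfl fun j _ => ?_
    ring
  simp only [h, Matrix.mulVec, dotProduct, Matrix.of_apply]
  rw [Finset.sum_comm]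
  refine Finset.sum_congr rfl fun i _ => ?_
  rw [Finset.mul_sum]
  conv_rhs => rw [Finset.sum_comm]
  refine Finset.sum_congr rfl fun j _ => ?_
  rw [Finset.sum_mul, Finset.mul_sum]

lemma psd_aux (c : I → ℝ) (hc : ∀ k, 0 ≤ c k) (w : I → S → ℝ) :
    (Matrix.of (fun i j => ∑ k, c k * (w k i * w k j)) : Matrix S S ℝ).PosSemidef := by
  rw [Matrix.posSemidef_iff_dotProduct_mulVec]
  constructor
  · ext i j
    simp only [Matrix.conjTranspose_apply, Matrix.of_apply, star_trivial]
    exact Finset.sum_congr rfl fun k _ => by ring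
  · intro v
    rw [star_trivial, quad_form_eq]
    exact Finset.sum_nonneg fun k _ => mul_nonneg (hc k) (sq_nonneg _)

lemma eig_aux (c : I → ℝ) (hc : ∀ k, 0 ≤ c k) (w : I → S → ℝ) (μ : ℝ) (v : S → ℝ)
    (hv : v ≠ 0)
    (hev : (Matrix.of (fun i j => ∑ k, c k * (w k i * w k j)) : Matrix S S ℝ).mulVec v = μ • v) :
    μ ≤ ∑ k, c k * ∑ t, (w k t) ^ 2 := by
  have hq := quad_form_eq c w v
  rw [hev] at hq
  have h1 : v ⬝ᵥ (μ • v) = μ * ∑ t, (v t) ^ 2 := by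
    simp only [dotProduct, Pi.smul_apply, smul_eq_mul, Finset.mul_sum]
    exact Finset.sum_congr rfl fun t _ => by ring
  have hv2 : 0 < ∑ t, (v t) ^ 2 := by
    obtain ⟨t, ht⟩ : ∃ t, v t ≠ 0 := by
      by_contra hcon; push_neg at hcon; exact hv (funext hcon)
    exact Finset.sum_pos' (fun i _ => sq_nonneg _) ⟨t, Finset.mem_univ t, by positivity⟩
  have key : μ * ∑ t, (v t) ^ 2 ≤ (∑ k, c k * ∑ t, (w k t) ^ 2) * ∑ t, (v t) ^ 2 := by
    rw [← h1, hq, Finset.sum_mul]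
    refine Finset.sum_le_sum fun k _ => ?_
    have hcs := Finset.sum_mul_sq_le_sq_mul_sq Finset.univ (w k) v
    calc c k * (∑ t, w k t * v t) ^ 2
        ≤ c k * ((∑ t, (w k t) ^ 2) * ∑ t, (v t) ^ 2) :=
          mul_le_mul_of_nonneg_left hcs (hc k)
      _ = c k * (∑ t, (w k t) ^ 2) * ∑ t, (v t) ^ 2 := by ring
  exact le_of_mul_le_mul_right key hv2

end aux

theorem tdNoise_covariance_bound
    {S A : Type*} [Fintype S] [Nonempty S] [DecidableEq S] [Fintype A]
    (γ : ℝ) (hγ0 : 0 ≤ γ) (hγ1 : γ < 1)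
    (π : S → A → ℝ) (hπ0 : ∀ s a, 0 ≤ π s a) (hπ1 : ∀ s, ∑ a, π s a = 1)
    (P : S → A → S → ℝ) (hP0 : ∀ s a s', 0 ≤ P s a s') (hP1 : ∀ s a, ∑ s', P s a s' = 1)
    (r : S → A → S → ℝ) (hr : ∀ s a s', |r s a s'| ≤ 1)
    (d : S → ℝ) (hd : ∀ s, 0 < d s) (hd1 : ∑ s, d s = 1)
    (V : S → ℝ) (hV : ‖V‖ ≤ 1 / (1 - γ))
    (W : Matrix S S ℝ)
    (hW : W = Matrix.of fun i j => ∑ s : S, ∑ a : A, ∑ s' : S,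
        d s * π s a * P s a s' *
          (tdNoise γ π P r d V s a s' i * tdNoise γ π P r d V s a s' j)) :
    W.PosSemidef ∧ lamMax W ≤ 9 / (1 - γ) ^ 2 := by
  have hβ : (0:ℝ) < 1 - γ := by linarith
  set C : S × A × S → ℝ := fun k => d k.1 * π k.1 k.2.1 * P k.1 k.2.1 k.2.2 with hC
  set wf : S × A × S → S → ℝ := fun k => tdNoise γ π P r d V k.1 k.2.1 k.2.2 with hwf
  have hC0 : ∀ k, 0 ≤ C k := fun k =>
    mul_nonneg (mul_nonneg (hd k.1).le (hπ0 _ _)) (hP0 _ _ _)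
  have hW' : W = Matrix.of fun i j => ∑ k : S × A × S, C k * (wf k i * wf k j) := by
    rw [hW]
    ext i j
    simp only [Matrix.of_apply, Fintype.sum_prod_type, hC, hwf]
  have hVt : ∀ t, |V t| ≤ 1 / (1 - γ) := by
    intro t
    have h := norm_le_pi_norm V t
    rw [Real.norm_eq_abs] at h
    exact h.trans hV
  have hδB : ∀ s a s', |r s a s' + γ * V s' - V s| ≤ 2 / (1 - γ) := by
    intro s a s'
    have h1 := abs_le.1 (hVt s')
    have h2 := abs_le.1 (hVt s)
    have h3 := abs_le.1 (hr s a s')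
    have hu : (1 - γ) * (1 / (1 - γ)) = 1 := mul_one_div_cancel hβ.ne'
    have h2u : (2:ℝ) / (1 - γ) = 2 * (1 / (1 - γ)) := by ring
    rw [h2u, abs_le]
    constructor <;>
      nlinarith [mul_le_mul_of_nonneg_left h1.2 hγ0, mul_le_mul_of_nonneg_left h1.1 hγ0, hu]
  set m : S → ℝ := fun t => d t * (∑ b, ∑ u, π t b * P t b u * r t b u) +
      γ * (d t * ∑ u, (∑ b, π t b * P t b u) * V u) - d t * V t with hmdef
  have hca : ∀ s, ∑ a, ∑ s', d s * π s a * P s a s' = d s := by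
    intro s
    have h : ∀ a, ∑ s', d s * π s a * P s a s' = d s * π s a := by
      intro a; rw [← Finset.mul_sum, hP1, mul_one]
    rw [Finset.sum_congr rfl fun a _ => h a, ← Finset.mul_sum, hπ1, mul_one]
  have hm : ∀ s, ∑ a, ∑ s', d s * π s a * P s a s' * (r s a s' + γ * V s' - V s) = m s := by
    intro s
    have e1 : ∑ a, ∑ s', d s * (π s a * P s a s' * r s a s')
        = d s * ∑ b, ∑ u, π s b * P s b u * r s b u := by
      rw [Finset.mul_sum]
      exact Finset.sum_congr rfl fun a _ => (Finset.mul_sum _ _ _).symm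
    have e2 : ∑ a, ∑ s', d s * π s a * P s a s' * V s'
        = d s * ∑ u, (∑ b, π s b * P s b u) * V u := by
      rw [Finset.sum_comm, Finset.mul_sum]
      refine Finset.sum_congr rfl fun u _ => ?_
      rw [Finset.sum_mul, Finset.mul_sum]
      exact Finset.sum_congr rfl fun a _ => by ring
    calc ∑ a, ∑ s', d s * π s a * P s a s' * (r s a s' + γ * V s' - V s)
        = ∑ a, ∑ s', (d s * (π s a * P s a s' * r s a s')
            + γ * (d s * π s a * P s a s' * V s')
            - (d s * π s a * P s a s') * V s) := by
          exact Finset.sum_congr rfl fun a _ => Finset.sum_congr rfl fun s' _ => by ring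
      _ = (∑ a, ∑ s', d s * (π s a * P s a s' * r s a s'))
            + γ * (∑ a, ∑ s', d s * π s a * P s a s' * V s')
            - (∑ a, ∑ s', d s * π s a * P s a s') * V s := by
          simp only [Finset.sum_add_distrib, Finset.sum_sub_distrib, ← Finset.mul_sum,
            ← Finset.sum_mul]
      _ = m s := by rw [e1, e2, hca s, hmdef]
  have hsq : ∀ s a s', ∑ t, (tdNoise γ π P r d V s a s' t) ^ 2
      = (r s a s' + γ * V s' - V s) ^ 2
        - 2 * (r s a s' + γ * V s' - V s) * m s + ∑ t, (m t) ^ 2 := by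
    intro s a s'
    have e : ∀ t, (tdNoise γ π P r d V s a s' t) ^ 2
        = (if t = s then (r s a s' + γ * V s' - V s) ^ 2
            - 2 * (r s a s' + γ * V s' - V s) * m t else 0) + (m t) ^ 2 := by
      intro t
      simp only [tdNoise, hmdef]
      split <;> ring
    rw [Finset.sum_congr rfl fun t _ => e t, Finset.sum_add_distrib,
      Finset.sum_ite_eq' Finset.univ s]
    simp
  set K : ℝ := ∑ t, (m t) ^ 2 with hK
  have hK0 : 0 ≤ K := Finset.sum_nonneg fun t _ => sq_nonneg _
  set B : ℝ := 2 / (1 - γ) with hB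
  have inner_eq : ∀ s, ∑ a, ∑ s', d s * π s a * P s a s' *
        ((r s a s' + γ * V s' - V s) ^ 2 - 2 * (r s a s' + γ * V s' - V s) * m s + K)
      = (∑ a, ∑ s', d s * π s a * P s a s' * (r s a s' + γ * V s' - V s) ^ 2)
        - 2 * m s * m s + K * d s := by
    intro s
    have e : ∀ a s', d s * π s a * P s a s' *
          ((r s a s' + γ * V s' - V s) ^ 2 - 2 * (r s a s' + γ * V s' - V s) * m s + K)
        = d s * π s a * P s a s' * (r s a s' + γ * V s' - V s) ^ 2
          - (2 * m s) * (d s * π s a * P s a s' * (r s a s' + γ * V s' - V s))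
          + K * (d s * π s a * P s a s') := by intro a s'; ring
    simp only [e, Finset.sum_add_distrib, Finset.sum_sub_distrib, ← Finset.mul_sum]
    rw [hm s]
    simp only [hP1, mul_one, ← Finset.mul_sum, hπ1]
  have inner_le : ∀ s, (∑ a, ∑ s', d s * π s a * P s a s' * (r s a s' + γ * V s' - V s) ^ 2)
      ≤ d s * B ^ 2 := by
    intro s
    calc ∑ a, ∑ s', d s * π s a * P s a s' * (r s a s' + γ * V s' - V s) ^ 2
        ≤ ∑ a, ∑ s', d s * π s a * P s a s' * B ^ 2 := by
          refine Finset.sum_le_sum fun a _ => Finset.sum_le_sum fun s' _ => ?_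
          have h := abs_le.1 (hδB s a s')
          exact mul_le_mul_of_nonneg_left (sq_le_sq' h.1 h.2)
            (mul_nonneg (mul_nonneg (hd s).le (hπ0 _ _)) (hP0 _ _ _))
      _ = d s * B ^ 2 := by
          simp only [← Finset.sum_mul]
          rw [hca s]
  have htr : ∑ k : S × A × S, C k * ∑ t, (wf k t) ^ 2 ≤ 9 / (1 - γ) ^ 2 := by
    have hKK : ∑ s, m s * m s = K := by
      rw [hK]; exact Finset.sum_congr rfl fun s _ => (pow_two (m s)).symm
    have step1 : ∑ k : S × A × S, C k * ∑ t, (wf k t) ^ 2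
        = ∑ s, ((∑ a, ∑ s', d s * π s a * P s a s' * (r s a s' + γ * V s' - V s) ^ 2)
            - 2 * m s * m s + K * d s) := by
      simp only [Fintype.sum_prod_type, hC, hwf]
      refine Finset.sum_congr rfl fun s _ => ?_
      rw [← inner_eq s]
      refine Finset.sum_congr rfl fun a _ => Finset.sum_congr rfl fun s' _ => ?_
      rw [hsq s a s', hK]
    have step2 : ∑ s, ((∑ a, ∑ s', d s * π s a * P s a s' * (r s a s' + γ * V s' - V s) ^ 2)
            - 2 * m s * m s + K * d s)
        ≤ ∑ s, (d s * B ^ 2 - 2 * (m s * m s) + K * d s) :=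
      Finset.sum_le_sum fun s _ => by have := inner_le s; linarith
    have step3 : ∑ s, (d s * B ^ 2 - 2 * (m s * m s) + K * d s) = B ^ 2 - 2 * K + K := by
      simp only [Finset.sum_add_distrib, Finset.sum_sub_distrib, ← Finset.sum_mul,
        ← Finset.mul_sum]
      rw [hd1, hKK]
      ring
    have hB2 : B ^ 2 = 4 / (1 - γ) ^ 2 := by rw [hB, div_pow]; norm_num
    have hfin : B ^ 2 - 2 * K + K ≤ 9 / (1 - γ) ^ 2 := by
      have h49 : (4:ℝ) / (1 - γ) ^ 2 ≤ 9 / (1 - γ) ^ 2 := by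
        have hp : (0:ℝ) < (1 - γ) ^ 2 := by positivity
        gcongr
        norm_num
      rw [hB2]; linarith
    calc ∑ k : S × A × S, C k * ∑ t, (wf k t) ^ 2
        ≤ ∑ s, (d s * B ^ 2 - 2 * (m s * m s) + K * d s) := by rw [step1]; exact step2
      _ = B ^ 2 - 2 * K + K := step3
      _ ≤ 9 / (1 - γ) ^ 2 := hfin
  refine ⟨?_, ?_⟩
  · rw [hW']; exact psd_aux C hC0 wf
  · unfold lamMax
    refine Real.sSup_le ?_ (by positivity)
    rintro μ ⟨v, hv, hev⟩
    rw [hW'] at hev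
    exact (eig_aux C hC0 wf μ v hv hev).trans htr
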